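/- Let X be a finite set, E a set of ordered pairs of distinct elements of X, and w : E → ℝ with w(e) > 0 for every e ∈ E, such that for every x ∈ X: Σ{w((u,x)) : (u,x) ∈ E} = Σ{w((x,v)) : (x,v) ∈ E}. Then there exist finitely many simple directed cycles C_0, …, C_{m−1} with all edges in E, and positive reals b_0, …, b_{m−1}, such that for every e ∈ E: w(e) = Σ{b_i : i < m, e is an edge of C_i}. -/

import Mathlib

open scoped BigOperators

variable {X : Type*}

/-- A tournament on `X`: irreflexive and, on distinct points, exactly one direction holds. -/
def IsTournament (R : X → X → Prop) : Prop :=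
  (∀ x, ¬ R x x) ∧ ∀ x y : X, x ≠ y → (R x y ↔ ¬ R y x)

/-- Out-degree of `x` in the relation `R`. -/
noncomputable def valT (R : X → X → Prop) (x : X) : ℕ :=
  Set.ncard {y | R x y}

/-- A tournament is balanced if every out-degree equals `(n-1)/2`. -/
def IsBalanced [Fintype X] (R : X → X → Prop) : Prop :=
  ∀ x : X, (valT R x : ℝ) = ((Fintype.card X : ℝ) - 1) / 2

/-- Action of a permutation on a relation. -/
def permAct (π : Equiv.Perm X) (R : X → X → Prop) : X → X → Prop :=
  fun x y => R (π.symm x) (π.symm y)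

/-- A set of relations closed under the permutation action. -/
def SymmetricSet (D : Set (X → X → Prop)) : Prop :=
  ∀ (π : Equiv.Perm X), ∀ R ∈ D, permAct π R ∈ D

/-- The majority closure of a set of tournaments. -/
def majCl [Fintype X] (D : Set (X → X → Prop)) : Set (X → X → Prop) :=
  {d | IsTournament d ∧ ∃ w : (X → X → Prop) → ℝ,
    (∀ c, 0 ≤ w c ∧ w c ≤ 1) ∧
    (∀ c, w c ≠ 0 → c ∈ D) ∧
    (Function.support w).Finite ∧
    (∑ᶠ c, w c) = 1 ∧
    ∀ x y : X, x ≠ y →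
      (d x y ↔ 1 / 2 < ∑ᶠ c ∈ {c : X → X → Prop | c ∈ D ∧ c x y}, w c)}

open Classical in
noncomputable def tOf (d : X → X → Prop) : X → X → ℝ :=
  fun x y => if d x y then 1 else 0

/-- pr-cl: the convex hull of `{t[d] : d ∈ D}`. -/
noncomputable def prCl (D : Set (X → X → Prop)) : Set (X → X → ℝ) :=
  convexHull ℝ (tOf '' D)

/-- `t` is a weighted tournament. -/
def IsWeighted (t : X → X → ℝ) : Prop :=
  ∀ x y : X, x ≠ y → 0 ≤ t x y ∧ t x y ≤ 1 ∧ t y x = 1 - t x y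

/-- A weighted tournament is balanced if each row sums to `(n-1)/2`. -/
def BalancedW [Fintype X] (t : X → X → ℝ) : Prop :=
  ∀ x : X, (∑ᶠ y ∈ {y : X | y ≠ x}, t x y) = ((Fintype.card X : ℝ) - 1) / 2

/-- A tournament is pseudo-balanced if it is dominated by a balanced weighted tournament. -/
def PseudoBalanced [Fintype X] (c : X → X → Prop) : Prop :=
  ∃ t : X → X → ℝ, IsWeighted t ∧ BalancedW t ∧
    ∀ x y : X, x ≠ y → c x y → 1 / 2 < t x y

open Classical in
noncomputable def tConfig (x y : X) (a s0 s1 : ℝ) : X → X → ℝ :=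
  fun u v =>
    if u = v then 0
    else if u = x ∧ v = y then a
    else if u = y ∧ v = x then 1 - a
    else if u = x then s0
    else if v = x then 1 - s0
    else if u = y then s1
    else if v = y then 1 - s1
    else 1 / 2

/-- `Prd_ℓ(𝒟)`. -/
noncomputable def PrdL [Fintype X] (l : ℕ) (D : Set (X → X → Prop)) : Set (ℝ × ℝ) :=
  {p | ∃ c ∈ D, ∃ x y : X, x ≠ y ∧ (c x y ↔ l = 1) ∧
    p.1 = (Set.ncard {z : X | z ≠ x ∧ z ≠ y ∧ c x z} : ℝ) / ((Fintype.card X : ℝ) - 2) ∧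
    p.2 = (Set.ncard {z : X | z ≠ x ∧ z ≠ y ∧ c y z} : ℝ) / ((Fintype.card X : ℝ) - 2)}

/-- `Pr_A(𝒟)`. -/
noncomputable def PrA [Fintype X] (A : Set ℝ) (D : Set (X → X → Prop)) : Set (ℝ × ℝ) :=
  {p | 0 ≤ p.1 ∧ p.1 ≤ 1 ∧ 0 ≤ p.2 ∧ p.2 ≤ 1 ∧
    ∃ x y : X, x ≠ y ∧ ∃ a ∈ A, tConfig x y a p.1 p.2 ∈ prCl D}

/-- `V_ℓ(d)` as a subset of `ℝ²`. -/
noncomputable def Vset [Fintype X] (l : ℕ) (d : X → X → Prop) : Set (ℝ × ℝ) :=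
  {p | ∃ x y : X, x ≠ y ∧ (if l = 1 then d x y else d y x) ∧
    p = ((valT d x : ℝ), (valT d y : ℝ))}

/-- `V*_ℓ(d)`. -/
noncomputable def VstarSet [Fintype X] (l : ℕ) (d : X → X → Prop) : Set (ℝ × ℝ) :=
  {p | ∃ q ∈ Vset l d, p = (q.1 - (l : ℝ), q.2 - (1 - (l : ℝ)))}

open Classical in
noncomputable def tCycle (k : ℕ) (xs : ℕ → X) (a : ℝ) : X → X → ℝ :=
  fun u v =>
    if u = v then 0
    else if ∃ i < k, u = xs i ∧ v = xs ((i + 1) % k) then a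
    else if ∃ i < k, v = xs i ∧ u = xs ((i + 1) % k) then 1 - a
    else 1 / 2

open Classical in
noncomputable def tTriple (x y z : X) : X → X → ℝ :=
  fun u v =>
    if u = v then 0
    else if (u, v) = (x, y) ∨ (u, v) = (y, z) ∨ (u, v) = (z, x) then 1
    else if (u, v) = (y, x) ∨ (u, v) = (z, y) ∨ (u, v) = (x, z) then 0
    else 1 / 2

/-- The dual (reverse) tournament. -/
def dualT (c : X → X → Prop) : X → X → Prop := fun x y => c y x

/-- The symmetric closure (orbit) of a single tournament. -/
def symCl (c : X → X → Prop) : Set (X → X → Prop) :=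
  {d | ∃ π : Equiv.Perm X, d = permAct π c}

lemma finsum_mem_eq_sum_indicator {ι : Type*} [Fintype ι] (S : Set ι) (b : ι → ℝ) :
    ∑ᶠ i ∈ S, b i = ∑ i : ι, S.indicator b i := by
  rw [finsum_mem_def, finsum_eq_sum_of_fintype]

lemma card_filter_shift (k : ℕ) (hk : 0 < k) (p : ℕ → Prop) [DecidablePred p] :
    ((Finset.range k).filter fun j => p ((j + 1) % k)).card
      = ((Finset.range k).filter fun j => p j).card := by
  have hcyc : ∀ j < k, ((j + 1) % k + (k - 1)) % k = j := by
    intro j hj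
    rw [Nat.mod_add_mod]
    have h1 : j + 1 + (k - 1) = j + k := by omega
    rw [h1, Nat.add_mod_right, Nat.mod_eq_of_lt hj]
  have hcyc2 : ∀ j < k, ((j + (k - 1)) % k + 1) % k = j := by
    intro j hj
    rw [Nat.mod_add_mod]
    have h1 : j + (k - 1) + 1 = j + k := by omega
    rw [h1, Nat.add_mod_right, Nat.mod_eq_of_lt hj]
  apply Finset.card_bij (fun j _ => (j + 1) % k)
  · intro a ha
    simp only [Finset.mem_filter, Finset.mem_range] at ha ⊢
    exact ⟨Nat.mod_lt _ hk, ha.2⟩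
  · intro a ha b hb hab
    simp only [Finset.mem_filter, Finset.mem_range] at ha hb
    have h := hcyc a ha.1
    rw [hab, hcyc b hb.1] at h
    exact h.symm
  · intro b hb
    simp only [Finset.mem_filter, Finset.mem_range] at hb
    refine ⟨(b + (k - 1)) % k, ?_, hcyc2 b hb.1⟩
    simp only [Finset.mem_filter, Finset.mem_range]
    exact ⟨Nat.mod_lt _ hk, by rw [hcyc2 b hb.1]; exact hb.2⟩

lemma exists_cycle_aux [Fintype X] [DecidableEq X]
    (E : Finset (X × X)) (hE : ∀ e ∈ E, e.1 ≠ e.2)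
    (w : X × X → ℝ) (hw : ∀ e ∈ E, 0 < w e)
    (hbal : ∀ x : X,
      ∑ e ∈ E.filter (fun e => e.2 = x), w e = ∑ e ∈ E.filter (fun e => e.1 = x), w e)
    (hne : E.Nonempty) :
    ∃ (k : ℕ) (xs : ℕ → X), 2 ≤ k ∧
      (∀ j1 < k, ∀ j2 < k, xs j1 = xs j2 → j1 = j2) ∧
      ∀ j < k, (xs j, xs ((j + 1) % k)) ∈ E := by
  classical
  have step : ∀ x : X, (E.filter (fun e => e.2 = x)).Nonempty →
      (E.filter (fun e => e.1 = x)).Nonempty := by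
    intro x hx
    rw [Finset.nonempty_iff_ne_empty]
    intro h
    have h0 : ∑ e ∈ E.filter (fun e => e.1 = x), w e = 0 := by rw [h, Finset.sum_empty]
    have hpos : 0 < ∑ e ∈ E.filter (fun e => e.2 = x), w e :=
      Finset.sum_pos (fun e he => hw e (Finset.mem_filter.mp he).1) hx
    rw [hbal x] at hpos
    linarith
  have key : ∀ s : {x : X // (E.filter (fun e => e.2 = x)).Nonempty},
      ∃ t : {x : X // (E.filter (fun e => e.2 = x)).Nonempty}, ((s : X), (t : X)) ∈ E := by
    rintro ⟨x, hx⟩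
    obtain ⟨e, he⟩ := step x hx
    rw [Finset.mem_filter] at he
    refine ⟨⟨e.2, ⟨e, Finset.mem_filter.mpr ⟨he.1, rfl⟩⟩⟩, ?_⟩
    have hxe : ((x : X), e.2) = e := by rw [← he.2]
    rw [hxe]
    exact he.1
  choose g hg using key
  obtain ⟨e0, he0⟩ := hne
  have hs0 : (E.filter (fun e => e.2 = e0.2)).Nonempty :=
    ⟨e0, Finset.mem_filter.mpr ⟨he0, rfl⟩⟩
  set f : ℕ → {x : X // (E.filter (fun e => e.2 = x)).Nonempty} :=
    fun n => g^[n] ⟨e0.2, hs0⟩ with hf_def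
  have hf : ∀ n, ((f n : X), (f (n + 1) : X)) ∈ E := by
    intro n
    have h1 : f (n + 1) = g (f n) := by
      exact Function.iterate_succ_apply' g n _
    rw [h1]
    exact hg (f n)
  have hcard : Fintype.card X < Fintype.card (Fin (Fintype.card X + 1)) := by simp
  obtain ⟨a, b, hab, heq⟩ := Fintype.exists_ne_map_eq_of_card_lt
      (fun n : Fin (Fintype.card X + 1) => (f n : X)) hcard
  have hex : ∃ n : ℕ, ∃ i < n, (f i : X) = (f n : X) := by
    rcases Ne.lt_or_gt hab with h | h
    · exact ⟨b, a, h, heq⟩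
    · exact ⟨a, b, h, heq.symm⟩
  set j0 := Nat.find hex with hj0_def
  obtain ⟨i0, hi0lt, hi0eq⟩ : ∃ i < j0, (f i : X) = (f j0 : X) := Nat.find_spec hex
  have hmin : ∀ a b : ℕ, a < b → b < j0 → (f a : X) ≠ (f b : X) := by
    intro a b hab' hb hfe
    exact Nat.find_min hex hb ⟨a, hab', hfe⟩
  refine ⟨j0 - i0, fun t => (f (i0 + t) : X), ?_, ?_, ?_⟩
  · have hd : (f i0 : X) ≠ (f (i0 + 1) : X) := hE _ (hf i0)
    rcases Nat.lt_or_ge (j0 - i0) 2 with h | h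
    · exfalso
      have h1 : j0 = i0 + 1 := by omega
      rw [h1] at hi0eq
      exact hd hi0eq
    · exact h
  · intro j1 hj1 j2 hj2 hfe
    by_contra hne'
    rcases Nat.lt_or_ge j1 j2 with h | h
    · exact hmin (i0 + j1) (i0 + j2) (by omega) (by omega) hfe
    · exact hmin (i0 + j2) (i0 + j1) (by omega) (by omega) hfe.symm
  · intro j hj
    rcases Nat.lt_or_ge (j + 1) (j0 - i0) with h | h
    · rw [Nat.mod_eq_of_lt h]
      have h1 := hf (i0 + j)
      have h2 : i0 + j + 1 = i0 + (j + 1) := by omega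
      rw [h2] at h1
      exact h1
    · have hj1 : j + 1 = j0 - i0 := by omega
      rw [hj1, Nat.mod_self]
      have h1 : i0 + j + 1 = j0 := by omega
      have h2 := hf (i0 + j)
      rw [h1, ← hi0eq] at h2
      simpa using h2

lemma flow_decomp_aux [Fintype X] [DecidableEq X] :
    ∀ (n : ℕ) (E : Finset (X × X)), E.card ≤ n → (∀ e ∈ E, e.1 ≠ e.2) →
    ∀ w : X × X → ℝ, (∀ e ∈ E, 0 < w e) →
    (∀ x : X, ∑ e ∈ E.filter (fun e => e.2 = x), w e
        = ∑ e ∈ E.filter (fun e => e.1 = x), w e) →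
    ∃ (m : ℕ) (k : Fin m → ℕ) (xs : Fin m → ℕ → X) (b : Fin m → ℝ),
      (∀ i, 2 ≤ k i) ∧
      (∀ i, ∀ j1 < k i, ∀ j2 < k i, xs i j1 = xs i j2 → j1 = j2) ∧
      (∀ i, ∀ j < k i, (xs i j, xs i ((j + 1) % k i)) ∈ E) ∧
      (∀ i, 0 < b i) ∧
      ∀ e ∈ E, w e =
        ∑ᶠ i ∈ {i : Fin m | ∃ j < k i, e = (xs i j, xs i ((j + 1) % k i))}, b i := by
  intro n
  induction n with
  | zero =>
    intro E hcard hE w hw hbal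
    have hemp : E = ∅ := Finset.card_eq_zero.mp (Nat.le_zero.mp hcard)
    subst hemp
    exact ⟨0, fun _ => 2, fun i => i.elim0, fun i => i.elim0, fun i => i.elim0,
      fun i => i.elim0, fun i => i.elim0, fun i => i.elim0,
      fun e he => absurd he (Finset.notMem_empty e)⟩
  | succ n ih =>
    intro E hcard hE w hw hbal
    classical
    rcases E.eq_empty_or_nonempty with rfl | hne
    · exact ⟨0, fun _ => 2, fun i => i.elim0, fun i => i.elim0, fun i => i.elim0,
        fun i => i.elim0, fun i => i.elim0, fun i => i.elim0,
        fun e he => absurd he (Finset.notMem_empty e)⟩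
    obtain ⟨kc, xsc, hkc2, hxinj, hxedge⟩ := exists_cycle_aux E hE w hw hbal hne
    set C : Finset (X × X) :=
      (Finset.range kc).image (fun j => (xsc j, xsc ((j + 1) % kc))) with hC_def
    have hCE : C ⊆ E := by
      intro e he
      simp only [hC_def, Finset.mem_image, Finset.mem_range] at he
      obtain ⟨j, hj, rfl⟩ := he
      exact hxedge j hj
    have hCne : C.Nonempty := by
      rw [hC_def, Finset.image_nonempty, Finset.nonempty_range_iff]
      omega
    set b0 : ℝ := C.inf' hCne w with hb0_def
    have hb0pos : 0 < b0 := by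
      rw [hb0_def, Finset.lt_inf'_iff]
      exact fun e he => hw e (hCE he)
    have hb0le : ∀ e ∈ C, b0 ≤ w e := fun e he => Finset.inf'_le w he
    set w' : X × X → ℝ := fun e => w e - (if e ∈ C then b0 else 0) with hw'_def
    set E' : Finset (X × X) := E.filter (fun e => w' e ≠ 0) with hE'_def
    have hE'subE : E' ⊆ E := Finset.filter_subset _ _
    have hw'nonneg : ∀ e ∈ E, 0 ≤ w' e := by
      intro e he
      simp only [hw'_def]
      by_cases hc : e ∈ C
      · simp only [hc, if_true]
        linarith [hb0le e hc]
      · simp only [hc, if_false]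
        linarith [hw e he]
    have hw'pos : ∀ e ∈ E', 0 < w' e := by
      intro e he
      rw [hE'_def, Finset.mem_filter] at he
      exact lt_of_le_of_ne (hw'nonneg e he.1) (Ne.symm he.2)
    have hw'zero : ∀ e ∈ E, e ∉ E' → w' e = 0 := by
      intro e he hne'
      by_contra h
      exact hne' (by rw [hE'_def, Finset.mem_filter]; exact ⟨he, h⟩)
    -- card bound
    obtain ⟨estar, hestarC, hestar_eq⟩ := Finset.exists_mem_eq_inf' hCne w
    have hestarE : estar ∈ E := hCE hestarC
    have hestar_not : estar ∉ E' := by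
      intro h
      have := hw'pos estar h
      simp only [hw'_def, hestarC, if_true] at this
      rw [← hb0_def] at hestar_eq
      linarith [hestar_eq]
    have hE'card : E'.card ≤ n := by
      have hss : E' ⊂ E := (Finset.ssubset_iff_of_subset hE'subE).mpr
        ⟨estar, hestarE, hestar_not⟩
      have := Finset.card_lt_card hss
      omega
    -- sums of the cycle-indicator part
    have hsum_wC : ∀ (p : X × X → Prop) [DecidablePred p],
        ∑ e ∈ E.filter p, (if e ∈ C then b0 else 0) = b0 * (C.filter p).card := by
      intro p _
      rw [Finset.sum_ite_mem]
      have hinter : E.filter p ∩ C = C.filter p := by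
        ext e
        simp only [Finset.mem_inter, Finset.mem_filter]
        constructor
        · rintro ⟨⟨_, hp⟩, hc⟩; exact ⟨hc, hp⟩
        · rintro ⟨hc, hp⟩; exact ⟨⟨hCE hc, hp⟩, hc⟩
      rw [hinter, Finset.sum_const, nsmul_eq_mul, mul_comm]
    have hg_inj : ∀ x : X, Set.InjOn (fun j => (xsc j, xsc ((j + 1) % kc)))
        ((Finset.range kc).filter (fun j => xsc ((j + 1) % kc) = x
          )) := by
      intro x j1 h1 j2 h2 hgeq
      simp only [Finset.coe_filter, Set.mem_setOf_eq, Finset.mem_range] at h1 h2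
      exact hxinj j1 h1.1 j2 h2.1 (congrArg Prod.fst hgeq)
    have hcardC : ∀ x : X,
        ((C.filter fun e => e.2 = x).card : ℝ) = ((C.filter fun e => e.1 = x).card : ℝ) := by
      intro x
      have h1 : (C.filter fun e => e.2 = x)
          = ((Finset.range kc).filter fun j => xsc ((j + 1) % kc) = x).image
            (fun j => (xsc j, xsc ((j + 1) % kc))) := by
        rw [hC_def, Finset.filter_image]
      have h2 : (C.filter fun e => e.1 = x)
          = ((Finset.range kc).filter fun j => xsc j = x).image
            (fun j => (xsc j, xsc ((j + 1) % kc))) := by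
        rw [hC_def, Finset.filter_image]
      have hinj2 : Set.InjOn (fun j => (xsc j, xsc ((j + 1) % kc)))
          ((Finset.range kc).filter fun j => xsc j = x) := by
        intro j1 h1' j2 h2' hgeq
        simp only [Finset.coe_filter, Set.mem_setOf_eq, Finset.mem_range] at h1' h2'
        exact hxinj j1 h1'.1 j2 h2'.1 (congrArg Prod.fst hgeq)
      rw [h1, h2, Finset.card_image_of_injOn (hg_inj x), Finset.card_image_of_injOn hinj2]
      exact_mod_cast congrArg Nat.cast
        (card_filter_shift kc (by omega) (fun j => xsc j = x))
    have hbal' : ∀ x : X, ∑ e ∈ E'.filter (fun e => e.2 = x), w' e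
        = ∑ e ∈ E'.filter (fun e => e.1 = x), w' e := by
      intro x
      have hsub : ∀ (p : X × X → Prop) [DecidablePred p],
          ∑ e ∈ E'.filter p, w' e = ∑ e ∈ E.filter p, w' e := by
        intro p _
        apply Finset.sum_subset (Finset.filter_subset_filter _ hE'subE)
        intro e he hne'
        rw [Finset.mem_filter] at he
        apply hw'zero e he.1
        intro hmem
        exact hne' (Finset.mem_filter.mpr ⟨hmem, he.2⟩)
      have hsplit : ∀ (p : X × X → Prop) [DecidablePred p],
          ∑ e ∈ E.filter p, w' e
            = ∑ e ∈ E.filter p, w e - ∑ e ∈ E.filter p, (if e ∈ C then b0 else 0) := by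
        intro p _
        rw [← Finset.sum_sub_distrib]
      rw [hsub, hsub, hsplit, hsplit, hsum_wC, hsum_wC, hbal x, hcardC x]
    obtain ⟨m', k', xs', b', h2', hinj', hedge', hbpos', hsum'⟩ :=
      ih E' hE'card (fun e he => hE e (hE'subE he)) w' hw'pos hbal'
    refine ⟨m' + 1, Fin.cases kc k', Fin.cases xsc xs', Fin.cases b0 b', ?_, ?_, ?_, ?_, ?_⟩
    · intro i
      refine Fin.cases ?_ ?_ i
      · simpa using hkc2
      · intro i'; simpa using h2' i'
    · intro i
      refine Fin.cases ?_ ?_ i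
      · simpa using hxinj
      · intro i'; simpa using hinj' i'
    · intro i
      refine Fin.cases ?_ ?_ i
      · simpa using hxedge
      · intro i'
        simp only [Fin.cases_succ]
        intro j hj
        exact hE'subE (hedge' i' j hj)
    · intro i
      refine Fin.cases ?_ ?_ i
      · simpa using hb0pos
      · intro i'; simpa using hbpos' i'
    · intro e he
      have hP0 : (∃ j, j < kc ∧ e = (xsc j, xsc ((j + 1) % kc))) ↔ e ∈ C := by
        simp only [hC_def, Finset.mem_image, Finset.mem_range]
        constructor
        · rintro ⟨j, hj, rfl⟩; exact ⟨j, hj, rfl⟩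
        · rintro ⟨j, hj, h⟩; exact ⟨j, hj, h.symm⟩
      have hold : (∑ᶠ i ∈ {i : Fin m' | ∃ j < k' i, e = (xs' i j, xs' i ((j + 1) % k' i))},
          b' i) = w' e := by
        by_cases heE' : e ∈ E'
        · exact (hsum' e heE').symm
        · rw [hw'zero e he heE']
          have hsetemp : {i : Fin m' | ∃ j < k' i, e = (xs' i j, xs' i ((j + 1) % k' i))}
              = (∅ : Set (Fin m')) := by
            ext i
            simp only [Set.mem_setOf_eq, Set.mem_empty_iff_false, iff_false, not_exists]
            rintro j ⟨hj, rfl⟩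
            exact heE' (hedge' i j hj)
          rw [hsetemp, finsum_mem_empty]
      have hfirst : (if (∃ j, j < kc ∧ e = (xsc j, xsc ((j + 1) % kc))) then b0 else 0)
          = (if e ∈ C then b0 else 0) := by
        by_cases hc : e ∈ C
        · rw [if_pos (hP0.mpr hc), if_pos hc]
        · rw [if_neg (fun h => hc (hP0.mp h)), if_neg hc]
      rw [finsum_mem_eq_sum_indicator, Fin.sum_univ_succ]
      set S : Set (Fin (m' + 1)) := {i | ∃ j < Fin.cases kc k' i,
        e = (Fin.cases xsc xs' i j, Fin.cases xsc xs' i ((j + 1) % Fin.cases kc k' i))}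
        with hS_def
      have h1 : S.indicator (Fin.cases b0 b') 0 = (if e ∈ C then b0 else 0) := by
        by_cases hc : e ∈ C
        · have hmem0 : (0 : Fin (m' + 1)) ∈ S := by
            rw [hS_def]
            simp only [Set.mem_setOf_eq, Fin.cases_zero]
            exact hP0.mpr hc
          rw [Set.indicator_of_mem hmem0, if_pos hc]
          simp
        · have hmem0 : (0 : Fin (m' + 1)) ∉ S := by
            rw [hS_def]
            simp only [Set.mem_setOf_eq, Fin.cases_zero]
            intro h
            exact hc (hP0.mp h)
          rw [Set.indicator_of_notMem hmem0, if_neg hc]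
      have h2 : (∑ i : Fin m', S.indicator (Fin.cases b0 b') i.succ) = w' e := by
        have hterm : ∀ i : Fin m', S.indicator (Fin.cases b0 b') i.succ
            = Set.indicator {i : Fin m' | ∃ j < k' i,
                e = (xs' i j, xs' i ((j + 1) % k' i))} b' i := by
          intro i
          by_cases hq : ∃ j < k' i, e = (xs' i j, xs' i ((j + 1) % k' i))
          · have hm1 : i.succ ∈ S := by
              rw [hS_def]
              simp only [Set.mem_setOf_eq, Fin.cases_succ]
              exact hq
            rw [Set.indicator_of_mem hm1]
            simp only [Fin.cases_succ]
            exact (Set.indicator_of_mem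
              (s := {i : Fin m' | ∃ j < k' i, e = (xs' i j, xs' i ((j + 1) % k' i))})
              hq b').symm
          · have hm1 : i.succ ∉ S := by
              rw [hS_def]
              simp only [Set.mem_setOf_eq, Fin.cases_succ]
              exact hq
            rw [Set.indicator_of_notMem hm1]
            exact (Set.indicator_of_notMem
              (s := {i : Fin m' | ∃ j < k' i, e = (xs' i j, xs' i ((j + 1) % k' i))})
              hq b').symm
        rw [Finset.sum_congr rfl (fun i _ => hterm i), ← finsum_mem_eq_sum_indicator]
        exact hold
      rw [h1, h2]
      simp only [hw'_def]
      ring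

theorem stmt14 [Fintype X] [DecidableEq X]
    (E : Finset (X × X)) (hE : ∀ e ∈ E, e.1 ≠ e.2)
    (w : X × X → ℝ) (hw : ∀ e ∈ E, 0 < w e)
    (hbal : ∀ x : X,
      ∑ e ∈ E.filter (fun e => e.2 = x), w e = ∑ e ∈ E.filter (fun e => e.1 = x), w e) :
    ∃ (m : ℕ) (k : Fin m → ℕ) (xs : Fin m → ℕ → X) (b : Fin m → ℝ),
      (∀ i, 2 ≤ k i) ∧
      (∀ i, ∀ j1 < k i, ∀ j2 < k i, xs i j1 = xs i j2 → j1 = j2) ∧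
      (∀ i, ∀ j < k i, (xs i j, xs i ((j + 1) % k i)) ∈ E) ∧
      (∀ i, 0 < b i) ∧
      ∀ e ∈ E, w e =
        ∑ᶠ i ∈ {i : Fin m | ∃ j < k i, e = (xs i j, xs i ((j + 1) % k i))}, b i :=
  flow_decomp_aux E.card E le_rfl hE w hw hbal
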